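/- For every finite connected simple graph G, the Chartrand–Erwin–Johns–Zhang boundary of G is contained in the Steinerberger boundary of G, i.e. (∂G)' ⊆ ∂G. -/
import Mathlib


open Finset

variable {V : Type*}

/-- The Steinerberger boundary of a graph: vertices `v` for which some witness `u` makes the
average distance of the neighbors of `v` to `u` strictly smaller than `d(v,u)`; by convention
all vertices are boundary vertices when the graph has a single vertex. -/
def sBoundary (G : SimpleGraph V) [Fintype V] [DecidableRel G.Adj] : Set V :=
  if Fintype.card V = 1 then Set.univ
  else {v | ∃ u : V, ∑ w ∈ G.neighborFinset v, G.dist w u < G.degree v * G.dist v u}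

/-- The Chartrand–Erwin–Johns–Zhang boundary of a graph. -/
def cBoundary (G : SimpleGraph V) : Set V :=
  {v | ∃ u : V, ∀ w : V, G.Adj v w → G.dist w u ≤ G.dist v u}

theorem cBoundary_subset_sBoundary [Fintype V] (G : SimpleGraph V) [DecidableRel G.Adj]
    (hc : G.Connected) : cBoundary G ⊆ sBoundary G := by
  intro v hv
  obtain ⟨u, hu⟩ := hv
  unfold sBoundary
  split_ifs with hcard
  · trivial
  · -- there is some vertex ≠ v
    have : Nontrivial V := by
      have h1 : 1 ≤ Fintype.card V := Fintype.card_pos_iff.mpr hc.nonempty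
      exact Fintype.one_lt_card_iff_nontrivial.mp (lt_of_le_of_ne h1 (Ne.symm hcard))
    obtain ⟨x, hx⟩ := exists_ne v
    -- v has a neighbor
    have hdx : G.dist v x ≠ 0 :=
      SimpleGraph.dist_ne_zero_iff_ne_and_reachable.mpr ⟨hx.symm, hc.preconnected v x⟩
    have hnbr : ∃ w, G.Adj v w := by
      obtain ⟨p, hp⟩ := SimpleGraph.exists_walk_of_dist_ne_zero hdx
      cases p with
      | nil => exact absurd hp.symm (by simpa using hdx)
      | cons h q => exact ⟨_, h⟩
    -- v ≠ u
    have hvu : v ≠ u := by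
      rintro rfl
      obtain ⟨w, hw⟩ := hnbr
      have := hu w hw
      rw [SimpleGraph.dist_self, Nat.le_zero, SimpleGraph.dist_eq_zero_iff_eq_or_not_reachable]
        at this
      rcases this with h | h
      · exact hw.ne h.symm
      · exact h (hc.preconnected w v)
    have hdvu : G.dist v u ≠ 0 :=
      SimpleGraph.dist_ne_zero_iff_ne_and_reachable.mpr ⟨hvu, hc.preconnected v u⟩
    -- a neighbor strictly closer to u
    obtain ⟨p, hp⟩ := SimpleGraph.exists_walk_of_dist_ne_zero hdvu
    refine ⟨u, ?_⟩
    cases p with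
    | nil => exact absurd hp.symm (by simpa using hdvu)
    | cons h q =>
      rename_i w
      have hwlt : G.dist w u < G.dist v u := by
        have h1 : G.dist w u ≤ q.length := SimpleGraph.dist_le q
        have h2 : q.length + 1 = G.dist v u := by simpa using hp
        omega
      calc ∑ x ∈ G.neighborFinset v, G.dist x u
          < ∑ _x ∈ G.neighborFinset v, G.dist v u := by
            apply Finset.sum_lt_sum
            · intro i hi
              exact hu i (by simpa using hi)
            · exact ⟨w, by simpa using h, hwlt⟩
        _ = G.degree v * G.dist v u := by
            rw [Finset.sum_const, smul_eq_mul, SimpleGraph.degree]
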